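/- In the rock–paper–scissors game, if both players run CFR (regret matching with simultaneous updates) starting from identical imbalanced initial strategies x₁ = y₁, then x_t = y_t for all t and the sequence of iterates {x_t} does not converge (CFR with this initialization produces a diverging sequence). -/

import Mathlib

open Finset Filter Topology

noncomputable section

def dotp3 (a b : Fin 3 → ℝ) : ℝ := ∑ i, a i * b i

/-- The rock-paper-scissors payoff matrix. -/
def RPS : Matrix (Fin 3) (Fin 3) ℝ := !![0, -1, 1; 1, 0, -1; -1, 1, 0]

/-- The probability simplex over three actions. -/
def simplex3 : Set (Fin 3 → ℝ) := {x | (∀ i, 0 ≤ x i) ∧ (∑ i, x i) = 1}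

/-- A distribution is imbalanced if some permutation `λ` of the coordinates satisfies
`x_{λ(1)} ≥ x_{λ(2)} ≥ 0 = x_{λ(3)}`. -/
def Imbalanced (x : Fin 3 → ℝ) : Prop :=
  ∃ lam : Equiv.Perm (Fin 3), x (lam 0) ≥ x (lam 1) ∧ x (lam 1) ≥ 0 ∧ x (lam 2) = 0

/-- Instantaneous regret of player x at time `t`:
`reg_{t,j} = ⟨x_t, G y_t⟩ − (G y_t)_j`. -/
def regX (x y : ℕ → Fin 3 → ℝ) (t : ℕ) (j : Fin 3) : ℝ :=
  dotp3 (x t) (RPS.mulVec (y t)) - RPS.mulVec (y t) j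

/-- Instantaneous regret of player y at time `t` (loss vector `−Gᵀ x_t`). -/
def regY (x y : ℕ → Fin 3 → ℝ) (t : ℕ) (j : Fin 3) : ℝ :=
  dotp3 (y t) (-(RPS.transpose.mulVec (x t))) - (-(RPS.transpose.mulVec (x t))) j

/-- Cumulative regret of player x: `Reg_0 = 0`, `Reg_t = Reg_{t-1} + reg_t`. -/
def RegX (x y : ℕ → Fin 3 → ℝ) (t : ℕ) (j : Fin 3) : ℝ :=
  ∑ s ∈ Finset.Icc 1 t, regX x y s j

/-- Cumulative regret of player y. -/
def RegY (x y : ℕ → Fin 3 → ℝ) (t : ℕ) (j : Fin 3) : ℝ :=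
  ∑ s ∈ Finset.Icc 1 t, regY x y s j

/-- Both players run CFR (regret matching with simultaneous updates): strategies lie
in the simplex, and whenever the positive cumulative regrets have positive total mass,
the next strategy is their normalization (otherwise play is arbitrary). -/
def IsCFR (x y : ℕ → Fin 3 → ℝ) : Prop :=
  (∀ t : ℕ, 1 ≤ t → x t ∈ simplex3 ∧ y t ∈ simplex3) ∧
  (∀ t : ℕ, 1 ≤ t → (0 < ∑ k, max (RegX x y t k) 0) →
    ∀ j, x (t + 1) j = max (RegX x y t j) 0 / ∑ k, max (RegX x y t k) 0) ∧
  (∀ t : ℕ, 1 ≤ t → (0 < ∑ k, max (RegY x y t k) 0) →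
    ∀ j, y (t + 1) j = max (RegY x y t j) 0 / ∑ k, max (RegY x y t k) 0)


section Aux

variable (x y : ℕ → Fin 3 → ℝ)

lemma regX_formula (s : ℕ) (h : x s = y s) (j : Fin 3) :
    regX x y s j = x s (j+1) - x s (j+2) := by
  fin_cases j <;>
    simp [regX, dotp3, RPS, Matrix.mulVec, dotProduct, Fin.sum_univ_three, ← h] <;> ring

lemma regY_eq_regX (s : ℕ) (h : x s = y s) (j : Fin 3) :
    regY x y s j = regX x y s j := by
  fin_cases j <;>
    simp [regX, regY, dotp3, RPS, Matrix.mulVec, dotProduct, Matrix.transpose,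
      Fin.sum_univ_three, ← h] <;> ring

lemma sum_regX (s : ℕ) (h : x s = y s) : ∑ j, regX x y s j = 0 := by
  rw [Fin.sum_univ_three, regX_formula x y s h 0, regX_formula x y s h 1,
    regX_formula x y s h 2]
  simp only [Fin.reduceAdd]
  ring

lemma sum_three_shift (f : Fin 3 → ℝ) (i : Fin 3) : ∑ j, f j = f i + f (i+1) + f (i+2) := by
  fin_cases i <;> simp [Fin.sum_univ_three] <;> ring

lemma RegX_succ (u : ℕ) (j : Fin 3) :
    RegX x y (u+1) j = RegX x y u j + regX x y (u+1) j := by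
  unfold RegX
  rw [Finset.sum_Icc_succ_top (Nat.le_add_left 1 u)]

lemma RegX_Ioc (t : ℕ) (j : Fin 3) :
    RegX x y t j = ∑ s ∈ Finset.Ioc 0 t, regX x y s j := by
  rw [RegX, ← Finset.Icc_add_one_left_eq_Ioc, zero_add]

lemma sum_RegX (t : ℕ) (hxy : ∀ s, 1 ≤ s → s ≤ t → x s = y s) :
    ∑ j, RegX x y t j = 0 := by
  unfold RegX
  rw [Finset.sum_comm]
  apply Finset.sum_eq_zero
  intro s hs
  rw [Finset.mem_Icc] at hs
  exact sum_regX x y s (hxy s hs.1 hs.2)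

end Aux

lemma fixed_contra (S a b c : ℝ) (hS : 0 < S) (ha : 0 ≤ a) (hb : 0 ≤ b) (hc : 0 ≤ c)
    (hsum : a + b + c = 1) (e1 : S*a = max (c-b) 0) (e2 : S*b = max (a-c) 0)
    (e3 : S*c = max (b-a) 0) : False := by
  have h1 : 0 < a → b < c := by
    intro h; by_contra hcb; push_neg at hcb
    have : max (c-b) 0 = 0 := max_eq_right (by linarith)
    nlinarith
  have h2 : 0 < b → c < a := by
    intro h; by_contra hcb; push_neg at hcb
    have : max (a-c) 0 = 0 := max_eq_right (by linarith)
    nlinarith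
  have h3 : 0 < c → a < b := by
    intro h; by_contra hcb; push_neg at hcb
    have : max (b-a) 0 = 0 := max_eq_right (by linarith)
    nlinarith
  rcases lt_trichotomy a 0 with h | h | h
  · linarith
  · rcases lt_trichotomy b 0 with h' | h' | h'
    · linarith
    · have hc' : 0 < c := by linarith
      have := h3 hc'; linarith
    · have hca := h2 h'
      have hc' : 0 < c := by linarith [hb]
      linarith [h3 hc']
  · have hbc := h1 h
    have hc' : 0 < c := by linarith
    have hab := h3 hc'
    have hb' : 0 < b := by linarith
    linarith [h2 hb']

lemma sum_Ioc_le (f : ℕ → ℝ) (T t : ℕ) (h : T ≤ t) (e : ℝ)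
    (hf : ∀ s, T < s → s ≤ t → f s ≤ e) :
    ∑ s ∈ Finset.Ioc 0 t, f s ≤ (∑ s ∈ Finset.Ioc 0 T, f s) + ((t - T : ℕ) : ℝ) * e := by
  rw [← Finset.sum_Ioc_consecutive _ (Nat.zero_le T) h]
  have h2 : ∑ s ∈ Finset.Ioc T t, f s ≤ (Finset.Ioc T t).card • e := by
    apply Finset.sum_le_card_nsmul
    intro s hs
    rw [Finset.mem_Ioc] at hs
    exact hf s hs.1 hs.2
  rw [Nat.card_Ioc, nsmul_eq_mul] at h2
  linarith

lemma le_sum_Ioc (f : ℕ → ℝ) (T t : ℕ) (h : T ≤ t) (e : ℝ)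
    (hf : ∀ s, T < s → s ≤ t → e ≤ f s) :
    (∑ s ∈ Finset.Ioc 0 T, f s) + ((t - T : ℕ) : ℝ) * e ≤ ∑ s ∈ Finset.Ioc 0 t, f s := by
  rw [← Finset.sum_Ioc_consecutive _ (Nat.zero_le T) h]
  have h2 : (Finset.Ioc T t).card • e ≤ ∑ s ∈ Finset.Ioc T t, f s := by
    apply Finset.card_nsmul_le_sum
    intro s hs
    rw [Finset.mem_Ioc] at hs
    exact hf s hs.1 hs.2
  rw [Nat.card_Ioc, nsmul_eq_mul] at h2
  linarith

lemma key_lemma (x y : ℕ → Fin 3 → ℝ) (hcfr : IsCFR x y) (hinit : x 1 = y 1)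
    (himb : Imbalanced (x 1)) :
    ∀ t, 1 ≤ t → x t = y t ∧ 0 < ∑ k, max (RegX x y t k) 0 := by
  intro t
  induction t using Nat.strong_induction_on with
  | _ t IH =>
  intro ht
  rcases Nat.lt_or_ge t 2 with h2 | h2
  · have ht1 : t = 1 := by omega
    subst ht1
    refine ⟨hinit, ?_⟩
    by_contra hS
    push_neg at hS
    have h0 : ∀ k ∈ Finset.univ, (0:ℝ) ≤ max (RegX x y 1 k) 0 := fun k _ => le_max_right _ _
    have hmax0 : ∀ k : Fin 3, max (RegX x y 1 k) 0 = 0 := fun k =>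
      (Finset.sum_eq_zero_iff_of_nonneg h0).mp
        (le_antisymm hS (Finset.sum_nonneg h0)) k (Finset.mem_univ k)
    have hall : ∀ k, RegX x y 1 k ≤ 0 := fun k => (le_max_left _ _).trans (le_of_eq (hmax0 k))
    have hReg1 : ∀ j, RegX x y 1 j = regX x y 1 j := by
      intro j; rw [RegX]; simp
    have f : ∀ j : Fin 3, x 1 (j+1) ≤ x 1 (j+2) := by
      intro j
      have h := hall j
      rw [hReg1, regX_formula x y 1 hinit] at h
      linarith
    have g0 : x 1 1 ≤ x 1 2 := by simpa using f 0
    have g1 : x 1 2 ≤ x 1 0 := by simpa using f 1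
    have g2 : x 1 0 ≤ x 1 1 := by simpa using f 2
    obtain ⟨lam, _, _, hl3⟩ := himb
    have htri : ∀ i : Fin 3, i = 0 ∨ i = 1 ∨ i = 2 := by decide
    have hall0 : ∀ i : Fin 3, x 1 i = x 1 0 := by
      intro i; rcases htri i with rfl | rfl | rfl <;> linarith
    have hsum1 : ∑ i, x 1 i = 1 := (hcfr.1 1 le_rfl).1.2
    rw [Fin.sum_univ_three, hall0 1, hall0 2] at hsum1
    have hz := hall0 (lam 2)
    rw [hl3] at hz
    linarith
  · obtain ⟨u, rfl⟩ : ∃ u, t = u + 1 := ⟨t - 1, by omega⟩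
    have hu : 1 ≤ u := by omega
    have hxy : ∀ s, 1 ≤ s → s ≤ u → x s = y s := fun s h1 h2' => (IH s (by omega) h1).1
    have hCu : 0 < ∑ k, max (RegX x y u k) 0 := (IH u (by omega) hu).2
    have hRXY : ∀ j, RegX x y u j = RegY x y u j := by
      intro j
      apply Finset.sum_congr rfl
      intro s hs
      rw [Finset.mem_Icc] at hs
      exact (regY_eq_regX x y s (hxy s hs.1 hs.2) j).symm
    have hCu' : 0 < ∑ k, max (RegY x y u k) 0 := by
      have he : ∀ k ∈ Finset.univ, max (RegY x y u k) 0 = max (RegX x y u k) 0 :=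
        fun k _ => by rw [hRXY]
      rw [Finset.sum_congr rfl he]
      exact hCu
    have hx1 : ∀ j, x (u+1) j = max (RegX x y u j) 0 / ∑ k, max (RegX x y u k) 0 :=
      hcfr.2.1 u hu hCu
    have hy1 : ∀ j, y (u+1) j = max (RegY x y u j) 0 / ∑ k, max (RegY x y u k) 0 :=
      hcfr.2.2 u hu hCu'
    have hA : x (u+1) = y (u+1) := by
      funext j
      rw [hx1 j, hy1 j, hRXY j]
      congr 1
      exact Finset.sum_congr rfl fun k _ => by rw [hRXY]
    refine ⟨hA, ?_⟩
    by_contra hS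
    push_neg at hS
    have h0 : ∀ k ∈ Finset.univ, (0:ℝ) ≤ max (RegX x y (u+1) k) 0 := fun k _ => le_max_right _ _
    have hmax0 : ∀ k : Fin 3, max (RegX x y (u+1) k) 0 = 0 := fun k =>
      (Finset.sum_eq_zero_iff_of_nonneg h0).mp
        (le_antisymm hS (Finset.sum_nonneg h0)) k (Finset.mem_univ k)
    have hle : ∀ k, RegX x y (u+1) k ≤ 0 := fun k => (le_max_left _ _).trans (le_of_eq (hmax0 k))
    have hxy' : ∀ s, 1 ≤ s → s ≤ u+1 → x s = y s := by
      intro s h1' h2'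
      rcases Nat.lt_or_ge s (u+1) with h | h
      · exact hxy s h1' (by omega)
      · have hs : s = u + 1 := by omega
        rw [hs]; exact hA
    have hsum0 := sum_RegX x y (u+1) hxy'
    rw [Fin.sum_univ_three] at hsum0
    have heq0 : ∀ k : Fin 3, RegX x y (u+1) k = 0 := by
      intro k
      have htri : ∀ i : Fin 3, i = 0 ∨ i = 1 ∨ i = 2 := by decide
      have a0 := hle 0; have a1 := hle 1; have a2 := hle 2
      rcases htri k with rfl | rfl | rfl <;> linarith
    have hRu : ∀ j, RegX x y u j = x (u+1) (j+2) - x (u+1) (j+1) := by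
      intro j
      have hs := RegX_succ x y u j
      rw [heq0 j, regX_formula x y (u+1) hA j] at hs
      linarith
    have hEq : ∀ j, (∑ k, max (RegX x y u k) 0) * x (u+1) j
        = max (x (u+1) (j+2) - x (u+1) (j+1)) 0 := by
      intro j
      rw [hx1 j, mul_comm, div_mul_cancel₀ _ (ne_of_gt hCu), hRu j]
    have hsimp := hcfr.1 (u+1) (by omega)
    have hnn := hsimp.1.1
    have hsum1 : x (u+1) 0 + x (u+1) 1 + x (u+1) 2 = 1 := by
      have hh := hsimp.1.2; rwa [Fin.sum_univ_three] at hh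
    exact fixed_contra _ _ _ _ hCu (hnn 0) (hnn 1) (hnn 2) hsum1
      (by simpa using hEq 0) (by simpa using hEq 1) (by simpa using hEq 2)

/-- Theorem 3: in rock-paper-scissors, CFR started from identical
imbalanced initial strategies `x₁ = y₁` keeps `x_t = y_t` for all `t ≥ 1` and produces
a sequence of iterates `x_t` that does not converge. -/
theorem cfr_diverges_in_rps (x y : ℕ → Fin 3 → ℝ) (hcfr : IsCFR x y)
    (hinit : x 1 = y 1) (himb : Imbalanced (x 1)) :
    (∀ t : ℕ, 1 ≤ t → x t = y t) ∧
    ¬ ∃ L : Fin 3 → ℝ, Tendsto x atTop (𝓝 L) := by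
  have key := key_lemma x y hcfr hinit himb
  have hsym : ∀ t, 1 ≤ t → x t = y t := fun t ht => (key t ht).1
  refine ⟨hsym, ?_⟩
  rintro ⟨L, hL⟩
  have htri : ∀ i : Fin 3, i = 0 ∨ i = 1 ∨ i = 2 := by decide
  have e1 : ∀ i : Fin 3, i + 2 + 1 = i := by decide
  have e2 : ∀ i : Fin 3, i + 2 + 2 = i + 1 := by decide
  have e3 : ∀ i : Fin 3, i + 1 + 1 = i + 2 := by decide
  have e4 : ∀ i : Fin 3, i + 1 + 2 = i := by decide
  have hcoord : ∀ j, Tendsto (fun t => x t j) atTop (𝓝 (L j)) :=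
    fun j => (tendsto_pi_nhds.mp hL) j
  have hupd : ∀ t, 1 ≤ t → ∀ j,
      x (t+1) j = max (RegX x y t j) 0 / ∑ k, max (RegX x y t k) 0 :=
    fun t ht => hcfr.2.1 t ht (key t ht).2
  have hSpos : ∀ t, 1 ≤ t → 0 < ∑ k, max (RegX x y t k) 0 := fun t ht => (key t ht).2
  have hsum0 : ∀ t, ∑ j, RegX x y t j = 0 := fun t => sum_RegX x y t (fun s h1 _ => hsym s h1)
  have hnnL : ∀ j, 0 ≤ L j := by
    intro j
    refine ge_of_tendsto (hcoord j) ?_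
    filter_upwards [eventually_ge_atTop 1] with t ht
    exact (hcfr.1 t ht).1.1 j
  have hsumL : L 0 + L 1 + L 2 = 1 := by
    have h1 : Tendsto (fun t => x t 0 + x t 1 + x t 2) atTop (𝓝 (L 0 + L 1 + L 2)) :=
      ((hcoord 0).add (hcoord 1)).add (hcoord 2)
    have h2 : Tendsto (fun t => x t 0 + x t 1 + x t 2) atTop (𝓝 1) := by
      apply Tendsto.congr' _ (tendsto_const_nhds (x := (1:ℝ)))
      filter_upwards [eventually_ge_atTop 1] with t ht
      have hs := (hcfr.1 t ht).1.2
      rw [Fin.sum_univ_three] at hs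
      exact hs.symm
    exact tendsto_nhds_unique h1 h2
  have hreg : ∀ j, Tendsto (fun t => regX x y t j) atTop (𝓝 (L (j+1) - L (j+2))) := by
    intro j
    apply Tendsto.congr' _ ((hcoord (j+1)).sub (hcoord (j+2)))
    filter_upwards [eventually_ge_atTop 1] with t ht
    exact (regX_formula x y t (hsym t ht) j).symm
  -- if the limiting regret in direction j is negative, cumulative regret is eventually ≤ 0
  have hnegReg : ∀ j : Fin 3, L (j+1) - L (j+2) < 0 → ∀ᶠ t in atTop, RegX x y t j ≤ 0 := by
    intro j hrj
    have hev : ∀ᶠ s in atTop, regX x y s j < (L (j+1) - L (j+2)) / 2 :=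
      (hreg j).eventually_lt_const (by linarith)
    rw [eventually_atTop] at hev
    obtain ⟨T, hT⟩ := hev
    obtain ⟨N, hN⟩ := exists_nat_ge (RegX x y T j / (-(L (j+1) - L (j+2)) / 2))
    rw [eventually_atTop]
    refine ⟨T + N, fun t ht => ?_⟩
    have hTt : T ≤ t := le_trans (Nat.le_add_right _ _) ht
    have hb := sum_Ioc_le (fun s => regX x y s j) T t hTt ((L (j+1) - L (j+2)) / 2)
      (fun s hs1 _ => le_of_lt (hT s (le_of_lt hs1)))
    rw [← RegX_Ioc, ← RegX_Ioc] at hb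
    have hcast : (N : ℝ) ≤ ((t - T : ℕ) : ℝ) := by
      have : N ≤ t - T := by omega
      exact_mod_cast this
    have hCN : RegX x y T j ≤ (N:ℝ) * (-(L (j+1) - L (j+2))/2) := by
      have hpos2 : (0:ℝ) < -(L (j+1) - L (j+2))/2 := by linarith
      rw [div_le_iff₀ hpos2] at hN
      linarith
    have h3 : ((t - T:ℕ):ℝ) * ((L (j+1) - L (j+2)) / 2)
        ≤ (N:ℝ) * ((L (j+1) - L (j+2)) /2) :=
      mul_le_mul_of_nonpos_right hcast (by linarith)
    linarith
  have hzeroL : ∀ j : Fin 3, L (j+1) - L (j+2) < 0 → L j = 0 := by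
    intro j hrj
    have hev := hnegReg j hrj
    rw [eventually_atTop] at hev
    obtain ⟨T, hT⟩ := hev
    have hx0 : ∀ᶠ t in atTop, x t j = 0 := by
      rw [eventually_atTop]
      refine ⟨T + 2, fun t ht => ?_⟩
      obtain ⟨s, rfl⟩ : ∃ s, t = s + 1 := ⟨t - 1, by omega⟩
      have hs1 : 1 ≤ s := by omega
      rw [hupd s hs1 j, max_eq_right (hT s (by omega))]
      simp
    refine tendsto_nhds_unique (hcoord j) (Tendsto.congr' ?_ (tendsto_const_nhds (x := (0:ℝ))))
    filter_upwards [hx0] with t ht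
    exact ht.symm
  -- every iterate from time 2 on has a zero coordinate
  have hzc : ∀ t, 1 ≤ t → ∃ j, x (t+1) j = 0 := by
    intro t ht
    have hex : ∃ j, RegX x y t j ≤ 0 := by
      by_contra hpos
      push_neg at hpos
      have hps : 0 < ∑ j, RegX x y t j :=
        Finset.sum_pos (fun j _ => hpos j) ⟨0, Finset.mem_univ 0⟩
      rw [hsum0 t] at hps
      exact lt_irrefl _ hps
    obtain ⟨j, hj⟩ := hex
    refine ⟨j, ?_⟩
    rw [hupd t ht j, max_eq_right hj]
    simp
  have hfreq : ∃ j, ∃ᶠ t in atTop, x t j = 0 := by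
    by_contra hno
    push_neg at hno
    have hev : ∀ j : Fin 3, ∀ᶠ t in atTop, x t j ≠ 0 := by
      intro j
      have hnf := hno j
      exact hnf
    have hand := (hev 0).and ((hev 1).and (hev 2))
    rw [eventually_atTop] at hand
    obtain ⟨T, hT⟩ := hand
    obtain ⟨h0', h1', h2'⟩ := hT (T+2) (by omega)
    obtain ⟨j, hj⟩ := hzc (T+1) (by omega)
    rcases htri j with rfl | rfl | rfl
    · exact h0' hj
    · exact h1' hj
    · exact h2' hj
  obtain ⟨j0, hj0f⟩ := hfreq
  have hj0 : L j0 = 0 := by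
    have hmem : ∃ᶠ t in atTop, x t j0 ∈ ({0} : Set ℝ) := hj0f.mono (fun t ht => ht)
    have hcl := mem_closure_of_frequently_of_tendsto hmem (hcoord j0)
    simpa using hcl
  have hsum3 : L j0 + L (j0+1) + L (j0+2) = 1 := by
    have hsh := sum_three_shift L j0
    rw [Fin.sum_univ_three] at hsh
    linarith
  -- L is a pure strategy
  have hpure : ∃ i : Fin 3, L i = 1 ∧ L (i+1) = 0 ∧ L (i+2) = 0 := by
    rcases eq_or_lt_of_le (hnnL (j0+1)) with ha | ha
    · refine ⟨j0+2, by linarith, ?_, ?_⟩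
      · rw [e1 j0]; exact hj0
      · rw [e2 j0]; linarith
    · have hb : L (j0+2) = 0 := by
        apply hzeroL (j0+2)
        rw [e1 j0, e2 j0, hj0]
        linarith
      refine ⟨j0+1, by linarith, ?_, ?_⟩
      · rw [e3 j0]; exact hb
      · rw [e4 j0]; exact hj0
  obtain ⟨i, hLi, hLi1, hLi2⟩ := hpure
  -- eventual estimates near the pure limit
  have hev1 : ∀ᶠ t in atTop, (1:ℝ)/2 ≤ regX x y t (i+2) := by
    have h := hreg (i+2)
    rw [e1 i, e2 i, hLi, hLi1] at h
    exact (h.eventually_const_lt (by norm_num)).mono (fun t ht => le_of_lt ht)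
  have hev2 : ∀ᶠ t in atTop, regX x y t i ≤ 1/100 := by
    have h := hreg i
    rw [hLi1, hLi2] at h
    exact (h.eventually_lt_const (by norm_num)).mono (fun t ht => le_of_lt ht)
  have hev3 : ∀ᶠ t in atTop, RegX x y t (i+1) ≤ 0 := by
    apply hnegReg (i+1)
    rw [e3 i, e4 i, hLi2, hLi]
    norm_num
  have hev4 : ∀ᶠ t in atTop, x t (i+2) < 1/3 := by
    have h := hcoord (i+2)
    rw [hLi2] at h
    exact h.eventually_lt_const (by norm_num)
  obtain ⟨T0, hT0⟩ := eventually_atTop.mp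
    ((hev1.and (hev2.and (hev3.and hev4))).and (eventually_ge_atTop 1))
  obtain ⟨N, hN⟩ := exists_nat_ge (3 * (|RegX x y T0 i| + |RegX x y T0 (i+2)| + 1))
  have hT0t : T0 ≤ T0 + N := Nat.le_add_right _ _
  have hucast : (((T0 + N) - T0 : ℕ) : ℝ) = (N : ℝ) := by
    congr 1
    omega
  have ht1 : 1 ≤ T0 + N := le_trans (hT0 T0 le_rfl).2 hT0t
  have habs := abs_nonneg (RegX x y T0 i)
  have habs2 := abs_nonneg (RegX x y T0 (i+2))
  have hCa := le_abs_self (RegX x y T0 i)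
  have hCb := neg_abs_le (RegX x y T0 i)
  have hDa := le_abs_self (RegX x y T0 (i+2))
  have hDb := neg_abs_le (RegX x y T0 (i+2))
  have hRi : RegX x y (T0 + N) i ≤ RegX x y T0 i + (N:ℝ) * (1/100) := by
    have hb := sum_Ioc_le (fun s => regX x y s i) T0 (T0+N) hT0t (1/100)
      (fun s hs1 _ => ((hT0 s (le_of_lt hs1)).1).2.1)
    rw [← RegX_Ioc, ← RegX_Ioc, hucast] at hb
    exact hb
  have hRi2 : RegX x y T0 (i+2) + (N:ℝ) * (1/2) ≤ RegX x y (T0 + N) (i+2) := by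
    have hb := le_sum_Ioc (fun s => regX x y s (i+2)) T0 (T0+N) hT0t (1/2)
      (fun s hs1 _ => ((hT0 s (le_of_lt hs1)).1).1)
    rw [← RegX_Ioc, ← RegX_Ioc, hucast] at hb
    exact hb
  have hRi1 : RegX x y (T0 + N) (i+1) ≤ 0 := ((hT0 (T0+N) hT0t).1).2.2.1
  have hRpos : 0 < RegX x y (T0 + N) (i+2) := by linarith
  have hmaxi : max (RegX x y (T0 + N) i) 0 ≤ RegX x y (T0 + N) (i+2) := by
    apply max_le _ (le_of_lt hRpos)
    linarith
  have hSle : (∑ k, max (RegX x y (T0 + N) k) 0) ≤ 2 * RegX x y (T0 + N) (i+2) := by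
    have hsh := sum_three_shift (fun k => max (RegX x y (T0 + N) k) 0) i
    rw [hsh, max_eq_right hRi1, max_eq_left (le_of_lt hRpos)]
    linarith
  have hx2 : x (T0 + N + 1) (i+2)
      = RegX x y (T0 + N) (i+2) / ∑ k, max (RegX x y (T0 + N) k) 0 := by
    rw [hupd (T0 + N) ht1 (i+2), max_eq_left (le_of_lt hRpos)]
  have hge : (1:ℝ)/2 ≤ x (T0 + N + 1) (i+2) := by
    rw [hx2, le_div_iff₀ (hSpos (T0+N) ht1)]
    linarith
  have hlt := ((hT0 (T0+N+1) (by omega)).1).2.2.2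
  linarith
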